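/- Let B be a finite nonempty set and F : B → B a function, viewed as a linear operator on the complex vector space with basis B (sending the basis vector b to the basis vector F(b)). Let Z be the maximal subset of B on which F restricts to a permutation, and for each k ≥ 1 let C_k(F) denote the number of cycles of length k in the cycle decomposition of F restricted to Z. Then for every complex number s, det(Id + s·F) = (1+s)^{C_1(F)} · ∏_{k>1} (1 − (−s)^k)^{C_k(F)}. Equivalently, det(Id + s·F) = ∏_{k≥1} (1 − (−s)^k)^{C_k(F)}. -/

import Mathlib

open Matrix

open Polynomial in
private lemma det_one_add_of_nilpotent {X : Type*} [Fintype X] [DecidableEq X]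
    {N : Matrix X X ℂ} (h : IsNilpotent N) : (1 + N).det = 1 := by
  obtain ⟨r, hr, hCr⟩ := Polynomial.isUnit_iff.mp (Matrix.isUnit_charpolyRev_of_isNilpotent h)
  have h1 : r = 1 := by
    have := Matrix.eval_charpolyRev (M := N)
    rw [← hCr] at this
    simpa using this
  have key : (1 + N).det = eval (-1) N.charpolyRev := by
    rw [Matrix.charpolyRev, ← Polynomial.coe_evalRingHom, RingHom.map_det]
    congr 1
    ext i j
    simp [Matrix.map_apply, Matrix.one_apply, Matrix.sub_apply, Matrix.smul_apply, Matrix.add_apply]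
    split_ifs <;> simp
  rw [key, ← hCr, h1]
  simp

private lemma det_mat_split {X : Type*} [Fintype X] [DecidableEq X] (f : X → X) (s : ℂ)
    (p : X → Prop) [DecidablePred p] (hf : ∀ x, p x → p (f x)) :
    Matrix.det ((1 : Matrix X X ℂ) + s • Matrix.of fun i j : X => if i = f j then (1:ℂ) else 0) =
      Matrix.det ((1 : Matrix {x // p x} {x // p x} ℂ) +
        s • Matrix.of fun i j : {x // p x} => if (i : X) = f j then (1:ℂ) else 0) *
      Matrix.det ((1 : Matrix {x // ¬ p x} {x // ¬ p x} ℂ) +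
        s • Matrix.of fun i j : {x // ¬ p x} => if (i : X) = f j then (1:ℂ) else 0) := by
  rw [← Matrix.det_submatrix_equiv_self (Equiv.sumCompl p)]
  rw [show ((1 : Matrix X X ℂ) + s • Matrix.of fun i j : X =>
        if i = f j then (1:ℂ) else 0).submatrix (Equiv.sumCompl p) (Equiv.sumCompl p) =
      Matrix.fromBlocks
        ((1 : Matrix {x // p x} {x // p x} ℂ) +
          s • Matrix.of fun i j : {x // p x} => if (i : X) = f j then (1:ℂ) else 0)
        (Matrix.of fun (i : {x // p x}) (j : {x // ¬ p x}) =>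
          s * if (i : X) = f j then (1:ℂ) else 0)
        0
        ((1 : Matrix {x // ¬ p x} {x // ¬ p x} ℂ) +
          s • Matrix.of fun i j : {x // ¬ p x} => if (i : X) = f j then (1:ℂ) else 0) from ?_,
    Matrix.det_fromBlocks_zero₂₁]
  ext i j
  rcases i with i | i <;> rcases j with j | j <;>
    simp [Matrix.submatrix_apply, Matrix.one_apply, Subtype.ext_iff]
  · exact fun h => j.2 (h ▸ i.2)
  · rw [if_neg (fun h : (i:X) = j => i.2 (h ▸ j.2)),
      if_neg (fun h : (i:X) = f j => i.2 (h ▸ hf j j.2))]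
    ring

open Equiv Equiv.Perm in
private lemma det_cycle {Y : Type*} [Fintype Y] [DecidableEq Y] (π : Equiv.Perm Y)
    (hc : π.IsCycle) (hfp : ∀ y, π y ≠ y) (s : ℂ) :
    Matrix.det ((1 : Matrix Y Y ℂ) + s • Matrix.of fun i j : Y => if i = π j then (1:ℂ) else 0) =
      1 - (-s) ^ (Fintype.card Y) := by
  have hsupp : π.support = Finset.univ := by
    ext y; simp [Equiv.Perm.mem_support, hfp y]
  have hne : π ≠ 1 := by
    obtain ⟨x, hx, -⟩ := hc
    intro h; exact hx (by simp [h])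
  set M : Matrix Y Y ℂ :=
    (1 : Matrix Y Y ℂ) + s • Matrix.of fun i j : Y => if i = π j then (1:ℂ) else 0 with hM
  have hMentry : ∀ i j, M i j =
      (if i = j then (1:ℂ) else 0) + s * (if i = π j then 1 else 0) := by
    intro i j
    simp [hM, Matrix.one_apply]
  -- classification of contributing permutations
  have key : ∀ τ : Equiv.Perm Y, (∀ i, τ i = i ∨ τ i = π i) → τ ≠ 1 → τ = π := by
    intro τ hτ hτ1
    obtain ⟨i₀, hi₀⟩ : ∃ i, τ i ≠ i := by
      by_contra h
      push_neg at h
      exact hτ1 (Equiv.ext h)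
    have forward : ∀ m : ℕ, τ ((π ^ m) i₀) = π ((π ^ m) i₀) := by
      intro m
      induction m with
      | zero => simpa using (hτ i₀).resolve_left hi₀
      | succ m ih =>
        rcases hτ ((π ^ (m+1)) i₀) with h | h
        · exfalso
          have h2 : (π ^ (m+1)) i₀ = π ((π ^ m) i₀) := by
            rw [pow_succ' π m]; rfl
          rw [h2, ← ih] at h
          exact hfp ((π ^ m) i₀) (by rw [← ih]; exact τ.injective h)
        · exact h
    ext j
    obtain ⟨m, hm⟩ := hc.exists_pow_eq (hfp i₀) (hfp j)
    rw [← hm]; exact forward m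
  rw [Matrix.det_apply]
  have hzero : ∀ τ ∈ Finset.univ, τ ∉ ({1, π} : Finset (Equiv.Perm Y)) →
      (Equiv.Perm.sign τ • ∏ i, M (τ i) i) = 0 := by
    intro τ _ hτ
    simp only [Finset.mem_insert, Finset.mem_singleton, not_or] at hτ
    obtain ⟨i, hi1, hi2⟩ : ∃ i, τ i ≠ i ∧ τ i ≠ π i := by
      by_contra h
      push_neg at h
      refine hτ.2 (key τ (fun i => ?_) hτ.1)
      rcases eq_or_ne (τ i) i with h' | h'
      · exact Or.inl h'
      · exact Or.inr (h i h')
    have : M (τ i) i = 0 := by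
      rw [hMentry, if_neg hi1, if_neg hi2]; ring
    have hp : (∏ i, M (τ i) i) = 0 := Finset.prod_eq_zero (Finset.mem_univ i) this
    rw [hp, smul_zero]
  rw [← Finset.sum_subset (Finset.subset_univ ({1, π} : Finset (Equiv.Perm Y))) hzero]
  rw [Finset.sum_pair (by simpa using hne.symm : (1 : Equiv.Perm Y) ≠ π)]
  have h1 : ∀ i : Y, M ((1 : Equiv.Perm Y) i) i = 1 := by
    intro i
    rw [hMentry]
    simp [Ne.symm (hfp i)]
  have h2 : ∀ i : Y, M (π i) i = s := by
    intro i
    rw [hMentry, if_neg (hfp i), if_pos rfl]; ring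
  rw [Finset.prod_congr rfl (fun i _ => h1 i), Finset.prod_congr rfl (fun i _ => h2 i)]
  rw [Finset.prod_const_one, Finset.prod_const, hc.sign, hsupp, Finset.card_univ]
  simp only [one_smul, Equiv.Perm.sign_one, Units.smul_def, Units.val_neg, Units.val_pow_eq_pow_val,
    Units.val_neg, Units.val_one, zsmul_eq_mul]
  push_cast
  ring

universe u

private lemma det_perm (s : ℂ) : ∀ (n : ℕ) {Y : Type u} [Fintype Y] [DecidableEq Y]
    (π : Equiv.Perm Y), π.support.card = n →
    Matrix.det ((1 : Matrix Y Y ℂ) + s • Matrix.of fun i j : Y => if i = π j then (1:ℂ) else 0) =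
      (1 + s) ^ (Fintype.card Y - n) * (π.cycleType.map (fun k => 1 - (-s)^k)).prod := by
  intro n
  induction n using Nat.strong_induction_on with
  | _ n IH =>
  intro Y _ _ π hn
  rcases Nat.eq_zero_or_pos n with h0 | hpos
  · subst h0
    have hπ1 : π = 1 := by
      rw [← Equiv.Perm.support_eq_empty_iff, ← Finset.card_eq_zero, hn]
    subst hπ1
    have : ((1 : Matrix Y Y ℂ) + s • Matrix.of fun i j : Y =>
        if i = (1 : Equiv.Perm Y) j then (1:ℂ) else 0) = (1 + s) • (1 : Matrix Y Y ℂ) := by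
      ext i j
      simp [Matrix.one_apply]
      split_ifs <;> simp_all
    rw [this, Matrix.det_smul, Matrix.det_one, Equiv.Perm.cycleType_one]
    simp
  · -- pick a point in the support
    obtain ⟨a, ha⟩ := Finset.card_pos.mp (hn ▸ hpos)
    set c := π.cycleOf a with hcdef
    have hcyc : c.IsCycle := π.isCycle_cycleOf (Equiv.Perm.mem_support.mp ha)
    set k := c.support.card with hkdef
    have hk2 : 2 ≤ k := hcyc.two_le_card_support
    have hsuple : c.support ⊆ π.support := Equiv.Perm.support_cycleOf_le π a
    have hinv' : ∀ x, x ∈ c.support ↔ π x ∈ c.support := by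
      intro x
      rw [Equiv.Perm.mem_support_cycleOf_iff, Equiv.Perm.mem_support_cycleOf_iff,
        Equiv.Perm.sameCycle_apply_right]
    have hinv : ∀ x, x ∈ c.support → π x ∈ c.support := fun x => (hinv' x).mp
    have hcapply : ∀ x ∈ c.support, c x = π x := by
      intro x hx
      rw [Equiv.Perm.mem_support_cycleOf_iff] at hx
      exact Equiv.Perm.SameCycle.cycleOf_apply hx.1
    -- the permutation on the cycle support
    set π₁ := π.subtypePerm (fun x => (hinv' x).symm) with hπ₁def
    have hπ₁ : ∀ x : {x // x ∈ c.support}, (π₁ x : Y) = π x := fun x => rfl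
    -- the complementary permutation τ (on all of Y)
    set τ := c⁻¹ * π with hτdef
    have hτ1 : ∀ x ∈ c.support, τ x = x := by
      intro x hx
      have h1 : π x = c x := (hcapply x hx).symm
      simp [hτdef, Equiv.Perm.mul_apply, h1]
    have hτ2 : ∀ x, x ∉ c.support → τ x = π x := by
      intro x hx
      have hπx : π x ∉ c.support := fun h => hx ((hinv' x).mpr h)
      have h1 : c⁻¹ (π x) = π x := by
        rw [← Equiv.Perm.notMem_support]
        rwa [Equiv.Perm.support_inv]
      simp [hτdef, Equiv.Perm.mul_apply, h1]
    have hdisj : Equiv.Perm.Disjoint c τ := by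
      intro x
      by_cases hx : x ∈ c.support
      · exact Or.inr (hτ1 x hx)
      · exact Or.inl (Equiv.Perm.notMem_support.mp hx)
    have hct : c * τ = π := by simp [hτdef]
    have hcycleType : π.cycleType = k ::ₘ τ.cycleType := by
      rw [← hct, Equiv.Perm.Disjoint.cycleType_mul hdisj, hcyc.cycleType]
      rfl
    -- restriction to the complement
    have hinv₂ : ∀ x, ¬ x ∈ c.support ↔ ¬ (π x ∈ c.support) := fun x => not_congr (hinv' x)
    set π₂ := π.subtypePerm (p := fun x => ¬ x ∈ c.support) (fun x => (hinv₂ x).symm) with hπ₂def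
    have hτinv : ∀ x, ¬ x ∈ c.support ↔ ¬ (τ x ∈ c.support) := by
      intro x
      by_cases hx : x ∈ c.support
      · rw [hτ1 x hx]
      · rw [hτ2 x hx]; exact hinv₂ x
    have hsub_eq : π₂ = τ.subtypePerm (p := fun x => ¬ x ∈ c.support) (fun x => (hτinv x).symm) := by
      ext x
      simp only [hπ₂def, Equiv.Perm.subtypePerm_apply]
      exact (hτ2 x x.2).symm
    have hofs : Equiv.Perm.ofSubtype (τ.subtypePerm (p := fun x => ¬ x ∈ c.support) (fun x => (hτinv x).symm)) = τ :=
      Equiv.Perm.ofSubtype_subtypePerm (p := fun x => ¬ x ∈ c.support) (fun x => (hτinv x).symm) (fun x hx => by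
        by_contra h
        exact hx (hτ1 x h))
    have hct2 : π₂.cycleType = τ.cycleType := by
      rw [hsub_eq]
      conv_rhs => rw [← hofs]
      exact Equiv.Perm.cycleType_ofSubtype.symm
    have hsum : k + τ.cycleType.sum = n := by
      have h1 : π.cycleType.sum = n := by rw [Equiv.Perm.sum_cycleType, hn]
      rw [hcycleType] at h1
      simpa using h1
    have hsupp2 : π₂.support.card = n - k := by
      rw [← Equiv.Perm.sum_cycleType, hct2]
      omega
    have hklen : k ≤ n := by omega
    have hnY : n ≤ Fintype.card Y := by
      rw [← hn, ← Finset.card_univ]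
      exact Finset.card_le_card (Finset.subset_univ _)
    have hcard1 : Fintype.card {x // x ∈ c.support} = k := Fintype.card_coe _
    have hcard2 : Fintype.card {x // ¬ x ∈ c.support} = Fintype.card Y - k := by
      rw [Fintype.card_subtype_compl, hcard1]
    -- block 1
    have hb1 : Matrix.det ((1 : Matrix {x // x ∈ c.support} {x // x ∈ c.support} ℂ) +
        s • Matrix.of fun i j : {x // x ∈ c.support} => if (i : Y) = π j then (1:ℂ) else 0) =
        1 - (-s) ^ k := by
      have hre : (fun i j : {x // x ∈ c.support} => if (i : Y) = π j then (1:ℂ) else 0) =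
          (fun i j : {x // x ∈ c.support} => if i = π₁ j then (1:ℂ) else 0) := by
        funext i j
        congr 1
        rw [eq_iff_iff, Subtype.ext_iff, hπ₁]
      rw [hre, det_cycle π₁ ?_ ?_ s, hcard1]
      · -- IsCycle π₁
        have ha' : a ∈ c.support := by
          rw [Equiv.Perm.mem_support_cycleOf_iff]
          exact ⟨Equiv.Perm.SameCycle.refl _ _, ha⟩
        refine ⟨⟨a, ha'⟩, ?_, ?_⟩
        · rw [Ne, Subtype.ext_iff, hπ₁]
          exact Equiv.Perm.mem_support.mp ha
        · intro y hy
          have hyc : Equiv.Perm.SameCycle π a (y : Y) := by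
            have hy2 := y.2
            rw [Equiv.Perm.mem_support_cycleOf_iff] at hy2
            exact hy2.1
          exact (Equiv.Perm.sameCycle_subtypePerm).mpr hyc
      · intro y
        rw [Ne, Subtype.ext_iff, hπ₁]
        exact Equiv.Perm.mem_support.mp (hsuple y.2)
    -- block 2
    have hb2 : Matrix.det ((1 : Matrix {x // ¬ x ∈ c.support} {x // ¬ x ∈ c.support} ℂ) +
        s • Matrix.of fun i j : {x // ¬ x ∈ c.support} => if (i : Y) = π j then (1:ℂ) else 0) =
        (1 + s) ^ (Fintype.card Y - n) * (τ.cycleType.map (fun k => 1 - (-s)^k)).prod := by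
      have hre : (fun i j : {x // ¬ x ∈ c.support} => if (i : Y) = π j then (1:ℂ) else 0) =
          (fun i j : {x // ¬ x ∈ c.support} => if i = π₂ j then (1:ℂ) else 0) := by
        funext i j
        congr 1
        rw [eq_iff_iff, Subtype.ext_iff]
        rfl
      rw [hre, IH (n - k) (by omega) π₂ hsupp2, hct2, hcard2,
        show Fintype.card Y - k - (n - k) = Fintype.card Y - n by omega]
    rw [det_mat_split π s (· ∈ c.support) hinv, hcycleType, Multiset.map_cons,
      Multiset.prod_cons, show ((1+s)^(Fintype.card Y - n) * ((1 - (-s)^k) *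
        (τ.cycleType.map (fun k => 1 - (-s)^k)).prod) : ℂ) =
        (1 - (-s)^k) * ((1+s)^(Fintype.card Y - n) *
        (τ.cycleType.map (fun k => 1 - (-s)^k)).prod) by ring]
    convert congrArg₂ (· * ·) hb1 hb2

/-- For `F : B → B` on a finite nonempty set, viewed as a linear operator on
`ℂ^B` sending `e_b` to `e_{F b}`, with `Z` the maximal subset on which `F` restricts to a
permutation `σ`, we have `det(Id + s F) = (1+s)^{C₁(F)} ∏_{k>1} (1 - (-s)^k)^{C_k(F)}`.
Here `C₁(F)` is the number of fixed points of `σ` and the product over `k > 1` is encoded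
via the cycle type of `σ` (the multiset of lengths of cycles of length `≥ 2`). -/
theorem stmt1 {B : Type*} [Fintype B] [DecidableEq B] [Nonempty B] (F : B → B)
    (Z : Finset B) (hZ : Set.BijOn F (Z : Set B) (Z : Set B))
    (hmax : ∀ W : Set B, Set.BijOn F W W → W ⊆ (Z : Set B))
    (σ : Equiv.Perm Z) (hσ : ∀ z : Z, (σ z : B) = F z) (s : ℂ) :
    Matrix.det ((1 : Matrix B B ℂ) +
        s • Matrix.of (fun i j : B => if i = F j then (1 : ℂ) else 0)) =
      (1 + s) ^ (Fintype.card {z : Z // σ z = z}) *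
        (σ.cycleType.map (fun k => (1 - (-s) ^ k))).prod := by

  classical
  have hmapsto : ∀ b ∈ Z, F b ∈ Z := fun b hb => hZ.mapsTo hb
  -- periodic points lie in Z
  have hper : ∀ (b : B) (m : ℕ), 1 ≤ m → F^[m] b = b → b ∈ Z := by
    intro b m hm hfix
    set W : Set B := Set.range (fun i : ℕ => F^[i] b) with hW
    have hmaps : Set.MapsTo F W W := by
      rintro _ ⟨i, rfl⟩
      exact ⟨i + 1, by simp [Function.iterate_succ_apply']⟩
    have hsurj : Set.SurjOn F W W := by
      rintro _ ⟨i, rfl⟩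
      refine ⟨F^[i + (m - 1)] b, ⟨i + (m - 1), rfl⟩, ?_⟩
      show F (F^[i + (m - 1)] b) = F^[i] b
      rw [← Function.iterate_succ_apply' F (i + (m - 1)) b]
      have h3 : (i + (m - 1)).succ = i + m := by omega
      rw [h3, Function.iterate_add_apply, hfix]
    have hbij : Set.BijOn F W W :=
      ((Set.toFinite W).surjOn_iff_bijOn_of_mapsTo hmaps).mp hsurj
    exact hmax W hbij ⟨0, rfl⟩
  -- Z absorbs iterates
  have hiter : ∀ (n : ℕ) (b : B), b ∈ Z → F^[n] b ∈ Z := by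
    intro n
    induction n with
    | zero => exact fun b hb => hb
    | succ n ih =>
      intro b hb
      rw [Function.iterate_succ_apply']
      exact hmapsto _ (ih b hb)
  -- long iterates land in Z
  have hland : ∀ b : B, F^[Fintype.card B] b ∈ Z := by
    intro b
    have : ¬ Function.Injective (fun i : Fin (Fintype.card B + 1) => F^[(i : ℕ)] b) := by
      intro hinj
      have := Fintype.card_le_of_injective _ hinj
      simp at this
    rw [Function.not_injective_iff] at this
    obtain ⟨u, v, huv, hne⟩ := this
    wlog hlt : (u : ℕ) < (v : ℕ) generalizing u v
    · exact this v u huv.symm hne.symm (by omega : (v:ℕ) < (u:ℕ))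
    · have hper' : F^[(v : ℕ) - (u : ℕ)] (F^[(u : ℕ)] b) = F^[(u : ℕ)] b := by
        rw [← Function.iterate_add_apply]
        rw [show (v:ℕ) - (u:ℕ) + (u:ℕ) = (v:ℕ) by omega]
        exact huv.symm
      have hZu : F^[(u : ℕ)] b ∈ Z := hper _ _ (by omega) hper'
      have : F^[Fintype.card B - (u:ℕ)] (F^[(u:ℕ)] b) ∈ Z := hiter _ _ hZu
      rwa [← Function.iterate_add_apply,
        show Fintype.card B - (u:ℕ) + (u:ℕ) = Fintype.card B by omega] at this
  -- split
  rw [det_mat_split F s (· ∈ Z) hmapsto]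
  -- block 2 is unipotent
  have hpow : ∀ (m : ℕ) (i j : {x // ¬ x ∈ Z}),
      ((Matrix.of fun i j : {x // ¬ x ∈ Z} => if (i : B) = F j then (1:ℂ) else 0) ^ m) i j =
      if (i : B) = F^[m] (j : B) then (1:ℂ) else 0 := by
    intro m
    induction m with
    | zero =>
      intro i j
      rw [pow_zero]
      rw [Matrix.one_apply, Function.iterate_zero_apply]
      congr 1
      rw [eq_iff_iff, Subtype.ext_iff]
    | succ m ih =>
      intro i j
      rw [pow_succ', Matrix.mul_apply]
      by_cases hz : F^[m] (j : B) ∈ Z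
      · have h0 : ∀ l : {x // ¬ x ∈ Z},
            (Matrix.of fun i j : {x // ¬ x ∈ Z} => if (i : B) = F j then (1:ℂ) else 0) i l *
              ((Matrix.of fun i j : {x // ¬ x ∈ Z} => if (i : B) = F j then (1:ℂ) else 0) ^ m) l j = 0 := by
          intro l
          rw [ih l j, if_neg (fun h : (l : B) = F^[m] (j : B) => l.2 (h ▸ hz)), mul_zero]
        rw [Finset.sum_congr rfl (fun l _ => h0 l), Finset.sum_const_zero,
          Function.iterate_succ_apply']
        rw [if_neg (fun h : (i : B) = F (F^[m] (j:B)) => i.2 (h ▸ hmapsto _ hz))]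
      · rw [Finset.sum_eq_single (⟨F^[m] (j : B), hz⟩ : {x // ¬ x ∈ Z})]
        · rw [ih, if_pos rfl, mul_one, Matrix.of_apply, Function.iterate_succ_apply']
        · intro l _ hl
          rw [ih l j, if_neg (fun h : (l : B) = F^[m] (j : B) => hl (Subtype.ext h)), mul_zero]
        · intro h
          exact absurd (Finset.mem_univ _) h
  have hb2 : Matrix.det ((1 : Matrix {x // ¬ x ∈ Z} {x // ¬ x ∈ Z} ℂ) +
      s • Matrix.of fun i j : {x // ¬ x ∈ Z} => if (i : B) = F j then (1:ℂ) else 0) = 1 := by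
    apply det_one_add_of_nilpotent
    refine ⟨Fintype.card B, ?_⟩
    rw [smul_pow]
    have : (Matrix.of fun i j : {x // ¬ x ∈ Z} => if (i : B) = F j then (1:ℂ) else 0) ^
        Fintype.card B = 0 := by
      ext i j
      rw [hpow, if_neg (fun h : (i : B) = F^[Fintype.card B] (j : B) => i.2 (h ▸ hland (j : B))),
        Matrix.zero_apply]
    rw [this, smul_zero]
  -- block 1 is the permutation σ
  have hb1 : Matrix.det ((1 : Matrix {x // x ∈ Z} {x // x ∈ Z} ℂ) +
      s • Matrix.of fun i j : {x // x ∈ Z} => if (i : B) = F j then (1:ℂ) else 0) =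
      (1 + s) ^ (Fintype.card {x // x ∈ Z} - σ.support.card) *
        (σ.cycleType.map (fun k => 1 - (-s)^k)).prod := by
    have hre : (fun i j : {x // x ∈ Z} => if (i : B) = F j then (1:ℂ) else 0) =
        (fun i j : {x // x ∈ Z} => if i = σ j then (1:ℂ) else 0) := by
      funext i j
      congr 1
      rw [eq_iff_iff, Subtype.ext_iff, hσ j]
    rw [hre, det_perm s σ.support.card σ rfl]
  rw [hb2, mul_one]
  have hfix : Fintype.card {z : Z // σ z = z} = Fintype.card {x // x ∈ Z} - σ.support.card := by
    have h1 : Fintype.card {z : Z // σ z = z} = Fintype.card {z : Z // ¬ z ∈ σ.support} := by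
      apply Fintype.card_congr
      apply Equiv.subtypeEquivRight
      intro z
      simp [Equiv.Perm.notMem_support]
    have h2 : Fintype.card {x : Z // x ∈ σ.support} = σ.support.card := by
      convert Fintype.card_coe σ.support
    rw [h1, Fintype.card_subtype_compl, h2, Fintype.card_coe]
  rw [hfix]
  convert hb1
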